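/- Let d ≥ 1 be an integer, let (a_q)_{q≥d} and (b_q)_{q≥d} be real sequences with A := Σ_{q≥d} q!·a_q² < ∞ and B := Σ_{q≥d} q!·b_q² < ∞, and let ρ : ℤ → ℝ satisfy |ρ(u)| ≤ 1 for all u and Σ_{u∈ℤ} |ρ(u)|^d < ∞. Define Δ(u) := Σ_{q=d}^{∞} q!·a_q·b_q·ρ(u)^q and, for M ≥ d, Δ^M(u) := Σ_{q=d}^{M} q!·a_q·b_q·ρ(u)^q. Then the antisymmetrized series 𝔸 := (1/2) Σ_{u=1}^{∞} (Δ(u) − Δ(−u)) and 𝔸^M := (1/2) Σ_{u=1}^{∞} (Δ^M(u) − Δ^M(−u)) converge absolutely, one has the bound |𝔸^M − 𝔸| ≤ (Σ_{q>M} q!·a_q²)^{1/2} · (Σ_{q>M} q!·b_q²)^{1/2} · Σ_{u∈ℤ} |ρ(u)|^d, and consequently 𝔸^M → 𝔸 as M → ∞. -/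

import Mathlib

set_option maxHeartbeats 4000000

open Filter

-- generic bound: |∑' t| ≤ (∑' c) * r
lemma auxBound (t c : ℕ → ℝ) (r : ℝ) (hc : Summable c) (h : ∀ q, |t q| ≤ c q * r) :
    |∑' q, t q| ≤ (∑' q, c q) * r := by
  have habs : Summable fun q => |t q| :=
    (hc.mul_right r).of_nonneg_of_le (fun q => abs_nonneg _) h
  calc |∑' q, t q| = ‖∑' q, t q‖ := (Real.norm_eq_abs _).symm
    _ ≤ ∑' q, ‖t q‖ := norm_tsum_le_tsum_norm (by simpa [Real.norm_eq_abs] using habs)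
    _ = ∑' q, |t q| := by simp [Real.norm_eq_abs]
    _ ≤ ∑' q, c q * r := Summable.tsum_le_tsum h habs (hc.mul_right r)
    _ = (∑' q, c q) * r := tsum_mul_right

-- Cauchy–Schwarz for tsums
lemma auxCS (f g : ℕ → ℝ) (hf0 : ∀ q, 0 ≤ f q) (hg0 : ∀ q, 0 ≤ g q)
    (hf : Summable f) (hg : Summable g) :
    ∑' q, Real.sqrt (f q) * Real.sqrt (g q) ≤
      Real.sqrt (∑' q, f q) * Real.sqrt (∑' q, g q) := by
  have hs : Summable fun q => Real.sqrt (f q) * Real.sqrt (g q) := by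
    refine ((hf.add hg).mul_left (1/2)).of_nonneg_of_le
      (fun q => mul_nonneg (Real.sqrt_nonneg _) (Real.sqrt_nonneg _)) (fun q => ?_)
    nlinarith [sq_nonneg (Real.sqrt (f q) - Real.sqrt (g q)), Real.sq_sqrt (hf0 q),
      Real.sq_sqrt (hg0 q)]
  refine Summable.tsum_le_of_sum_le hs (fun s => ?_)
  have h1 : (∑ q ∈ s, Real.sqrt (f q) * Real.sqrt (g q)) ^ 2 ≤
      (∑ q ∈ s, f q) * (∑ q ∈ s, g q) := by
    have := Finset.sum_mul_sq_le_sq_mul_sq s (fun q => Real.sqrt (f q)) (fun q => Real.sqrt (g q))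
    simpa [Real.sq_sqrt (hf0 _), Real.sq_sqrt (hg0 _)] using this
  have h2 : (∑ q ∈ s, f q) * (∑ q ∈ s, g q) ≤ (∑' q, f q) * (∑' q, g q) := by
    have hfa := Summable.sum_le_tsum s (fun q _ => hf0 q) hf
    have hgb := Summable.sum_le_tsum s (fun q _ => hg0 q) hg
    exact mul_le_mul hfa hgb (Finset.sum_nonneg fun q _ => hg0 q) (tsum_nonneg hf0)
  have h4 := Real.sqrt_le_sqrt (h1.trans h2)
  rwa [Real.sqrt_sq (Finset.sum_nonneg fun q _ =>
      mul_nonneg (Real.sqrt_nonneg _) (Real.sqrt_nonneg _)),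
    Real.sqrt_mul (tsum_nonneg hf0)] at h4

/-- convergence of the antisymmetric area correction, Corollary
`convergence_AA`.  With `Δ(u) = Σ_{q≥d} q! a_q b_q ρ(u)^q`, truncations
`Δ^M(u) = Σ_{q=d}^M q! a_q b_q ρ(u)^q`, `𝔸 = (1/2) Σ_{u≥1} (Δ(u) − Δ(−u))` and its analogue
`𝔸^M`: both antisymmetrized series converge absolutely,
`|𝔸^M − 𝔸| ≤ (Σ_{q>M} q! a_q²)^{1/2} (Σ_{q>M} q! b_q²)^{1/2} Σ_{u∈ℤ} |ρ(u)|^d`,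
and consequently `𝔸^M → 𝔸` as `M → ∞`. -/
theorem stmt19 (d : ℕ) (hd : 1 ≤ d) (a b : ℕ → ℝ)
    (ha : Summable fun q : ℕ => ((q + d).factorial : ℝ) * a (q + d) ^ 2)
    (hb : Summable fun q : ℕ => ((q + d).factorial : ℝ) * b (q + d) ^ 2)
    (ρ : ℤ → ℝ) (hρ1 : ∀ u, |ρ u| ≤ 1)
    (hρd : Summable fun u : ℤ => |ρ u| ^ d)
    (Δ : ℤ → ℝ)
    (hΔ : ∀ u, Δ u = ∑' q : ℕ, ((q + d).factorial : ℝ) * a (q + d) * b (q + d) * ρ u ^ (q + d))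
    (ΔM : ℕ → ℤ → ℝ)
    (hΔM : ∀ M u, ΔM M u = ∑ q ∈ Finset.Icc d M, (q.factorial : ℝ) * a q * b q * ρ u ^ q)
    (A : ℝ) (hA : A = (1 / 2) * ∑' u : ℕ, (Δ ((u : ℤ) + 1) - Δ (-((u : ℤ) + 1))))
    (AM : ℕ → ℝ)
    (hAM : ∀ M, AM M = (1 / 2) * ∑' u : ℕ, (ΔM M ((u : ℤ) + 1) - ΔM M (-((u : ℤ) + 1)))) :
    (Summable fun u : ℕ => |Δ ((u : ℤ) + 1) - Δ (-((u : ℤ) + 1))|) ∧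
    (∀ M : ℕ, Summable fun u : ℕ => |ΔM M ((u : ℤ) + 1) - ΔM M (-((u : ℤ) + 1))|) ∧
    (∀ M : ℕ, d ≤ M →
      |AM M - A| ≤
        Real.sqrt (∑' q : ℕ, ((q + (M + 1)).factorial : ℝ) * a (q + (M + 1)) ^ 2) *
          Real.sqrt (∑' q : ℕ, ((q + (M + 1)).factorial : ℝ) * b (q + (M + 1)) ^ 2) *
          ∑' u : ℤ, |ρ u| ^ d) ∧
    Tendsto AM atTop (nhds A) := by
  -- basic nonnegativity and injections
  have hρ0 : ∀ u, (0:ℝ) ≤ |ρ u| := fun u => abs_nonneg _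
  have inj1 : Function.Injective (fun u : ℕ => (u:ℤ) + 1) := by
    intro x y h; simpa using h
  have inj2 : Function.Injective (fun u : ℕ => -((u:ℤ) + 1)) := by
    intro x y h; simp at h; omega
  have hρpos : Summable fun u : ℕ => |ρ ((u:ℤ) + 1)| ^ d :=
    hρd.comp_injective inj1
  have hρneg : Summable fun u : ℕ => |ρ (-((u:ℤ) + 1))| ^ d :=
    hρd.comp_injective inj2
  -- the AM-GM summability of q! |a| |b| with generic shift k ≥ d
  have hcsum : ∀ k : ℕ, d ≤ k →
      Summable (fun q : ℕ => ((q + k).factorial : ℝ) * |a (q + k)| * |b (q + k)|) := by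
    intro k hk
    have hka : Summable fun q : ℕ => ((q + k).factorial : ℝ) * a (q + k) ^ 2 := by
      have h1 : (fun q : ℕ => ((q + k).factorial : ℝ) * a (q + k) ^ 2)
          = fun q => ((q + (k - d) + d).factorial : ℝ) * a (q + (k - d) + d) ^ 2 := by
        funext q; have h : q + (k - d) + d = q + k := by omega
        rw [h]
      rw [h1]; exact (summable_nat_add_iff (k - d)).2 ha
    have hkb : Summable fun q : ℕ => ((q + k).factorial : ℝ) * b (q + k) ^ 2 := by
      have h1 : (fun q : ℕ => ((q + k).factorial : ℝ) * b (q + k) ^ 2)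
          = fun q => ((q + (k - d) + d).factorial : ℝ) * b (q + (k - d) + d) ^ 2 := by
        funext q; have h : q + (k - d) + d = q + k := by omega
        rw [h]
      rw [h1]; exact (summable_nat_add_iff (k - d)).2 hb
    refine ((hka.add hkb).mul_left (1/2)).of_nonneg_of_le
      (fun q => by positivity) (fun q => ?_)
    have hfac : (0:ℝ) ≤ ((q + k).factorial : ℝ) := Nat.cast_nonneg _
    nlinarith [sq_nonneg (|a (q + k)| - |b (q + k)|), sq_abs (a (q + k)), sq_abs (b (q + k)),
      mul_nonneg (mul_nonneg hfac (abs_nonneg (a (q+k)))) (abs_nonneg (b (q+k)))]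
  -- pointwise termwise bound with generic shift k ≥ d
  have hterm : ∀ (k : ℕ), d ≤ k → ∀ (u : ℤ) (q : ℕ),
      |((q + k).factorial : ℝ) * a (q + k) * b (q + k) * ρ u ^ (q + k)| ≤
        (((q + k).factorial : ℝ) * |a (q + k)| * |b (q + k)|) * |ρ u| ^ d := by
    intro k hk u q
    have h1 : |ρ u| ^ (q + k) ≤ |ρ u| ^ d :=
      pow_le_pow_of_le_one (hρ0 u) (hρ1 u) (by omega)
    calc |((q + k).factorial : ℝ) * a (q + k) * b (q + k) * ρ u ^ (q + k)|
        = ((q + k).factorial : ℝ) * |a (q + k)| * |b (q + k)| * |ρ u| ^ (q + k) := by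
          rw [abs_mul, abs_mul, abs_mul, abs_pow, Nat.abs_cast]
      _ ≤ ((q + k).factorial : ℝ) * |a (q + k)| * |b (q + k)| * |ρ u| ^ d := by
          apply mul_le_mul_of_nonneg_left h1; positivity
  -- bound on Δ
  set C : ℝ := ∑' q : ℕ, ((q + d).factorial : ℝ) * |a (q + d)| * |b (q + d)| with hC
  have hCd := hcsum d le_rfl
  have hΔbound : ∀ u, |Δ u| ≤ C * |ρ u| ^ d := by
    intro u; rw [hΔ u]
    exact auxBound _ _ _ hCd (hterm d le_rfl u)
  -- summability of each Δ series term
  have hΔsummand : ∀ u : ℤ, Summable fun q : ℕ =>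
      ((q + d).factorial : ℝ) * a (q + d) * b (q + d) * ρ u ^ (q + d) := by
    intro u
    refine Summable.of_abs (((hCd.mul_right (|ρ u| ^ d)).of_nonneg_of_le
      (fun q => abs_nonneg _) (hterm d le_rfl u)))
  have hC0 : 0 ≤ C := tsum_nonneg fun q => by positivity
  -- Part 1
  have part1 : Summable fun u : ℕ => |Δ ((u : ℤ) + 1) - Δ (-((u : ℤ) + 1))| := by
    refine ((hρpos.add hρneg).mul_left C).of_nonneg_of_le (fun u => abs_nonneg _) (fun u => ?_)
    calc |Δ ((u : ℤ) + 1) - Δ (-((u : ℤ) + 1))| ≤ |Δ ((u : ℤ) + 1)| + |Δ (-((u : ℤ) + 1))| :=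
        abs_sub _ _
      _ ≤ C * |ρ ((u:ℤ) + 1)| ^ d + C * |ρ (-((u:ℤ) + 1))| ^ d :=
        add_le_add (hΔbound _) (hΔbound _)
      _ = C * (|ρ ((u:ℤ) + 1)| ^ d + |ρ (-((u:ℤ) + 1))| ^ d) := by ring
  -- bound on ΔM
  have hΔMbound : ∀ M u, |ΔM M u| ≤
      (∑ q ∈ Finset.Icc d M, (q.factorial : ℝ) * |a q| * |b q|) * |ρ u| ^ d := by
    intro M u; rw [hΔM M u]
    calc |∑ q ∈ Finset.Icc d M, (q.factorial : ℝ) * a q * b q * ρ u ^ q|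
        ≤ ∑ q ∈ Finset.Icc d M, |(q.factorial : ℝ) * a q * b q * ρ u ^ q| :=
          Finset.abs_sum_le_sum_abs _ _
      _ ≤ ∑ q ∈ Finset.Icc d M, ((q.factorial : ℝ) * |a q| * |b q|) * |ρ u| ^ d := by
          refine Finset.sum_le_sum fun q hq => ?_
          have hdq : d ≤ q := (Finset.mem_Icc.mp hq).1
          have h1 : |ρ u| ^ q ≤ |ρ u| ^ d := pow_le_pow_of_le_one (hρ0 u) (hρ1 u) hdq
          calc |(q.factorial : ℝ) * a q * b q * ρ u ^ q|
              = (q.factorial : ℝ) * |a q| * |b q| * |ρ u| ^ q := by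
                rw [abs_mul, abs_mul, abs_mul, abs_pow, Nat.abs_cast]
            _ ≤ (q.factorial : ℝ) * |a q| * |b q| * |ρ u| ^ d := by
                apply mul_le_mul_of_nonneg_left h1; positivity
      _ = (∑ q ∈ Finset.Icc d M, (q.factorial : ℝ) * |a q| * |b q|) * |ρ u| ^ d :=
          (Finset.sum_mul _ _ _).symm
  -- Part 2
  have part2 : ∀ M : ℕ, Summable fun u : ℕ => |ΔM M ((u : ℤ) + 1) - ΔM M (-((u : ℤ) + 1))| := by
    intro M
    set D := ∑ q ∈ Finset.Icc d M, (q.factorial : ℝ) * |a q| * |b q| with hD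
    refine ((hρpos.add hρneg).mul_left D).of_nonneg_of_le (fun u => abs_nonneg _) (fun u => ?_)
    calc |ΔM M ((u : ℤ) + 1) - ΔM M (-((u : ℤ) + 1))|
        ≤ |ΔM M ((u : ℤ) + 1)| + |ΔM M (-((u : ℤ) + 1))| := abs_sub _ _
      _ ≤ D * |ρ ((u:ℤ) + 1)| ^ d + D * |ρ (-((u:ℤ) + 1))| ^ d :=
        add_le_add (hΔMbound _ _) (hΔMbound _ _)
      _ = D * (|ρ ((u:ℤ) + 1)| ^ d + |ρ (-((u:ℤ) + 1))| ^ d) := by ring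
  -- shifted summability of the square series
  have hshiftA : ∀ k : ℕ, d ≤ k →
      Summable fun q : ℕ => ((q + k).factorial : ℝ) * a (q + k) ^ 2 := by
    intro k hk
    have h1 : (fun q : ℕ => ((q + k).factorial : ℝ) * a (q + k) ^ 2)
        = fun q => ((q + (k - d) + d).factorial : ℝ) * a (q + (k - d) + d) ^ 2 := by
      funext q; have h : q + (k - d) + d = q + k := by omega
      rw [h]
    rw [h1]; exact (summable_nat_add_iff (k - d)).2 ha
  have hshiftB : ∀ k : ℕ, d ≤ k →
      Summable fun q : ℕ => ((q + k).factorial : ℝ) * b (q + k) ^ 2 := by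
    intro k hk
    have h1 : (fun q : ℕ => ((q + k).factorial : ℝ) * b (q + k) ^ 2)
        = fun q => ((q + (k - d) + d).factorial : ℝ) * b (q + (k - d) + d) ^ 2 := by
      funext q; have h : q + (k - d) + d = q + k := by omega
      rw [h]
    rw [h1]; exact (summable_nat_add_iff (k - d)).2 hb
  -- Part 3
  have part3 : ∀ M : ℕ, d ≤ M →
      |AM M - A| ≤
        Real.sqrt (∑' q : ℕ, ((q + (M + 1)).factorial : ℝ) * a (q + (M + 1)) ^ 2) *
          Real.sqrt (∑' q : ℕ, ((q + (M + 1)).factorial : ℝ) * b (q + (M + 1)) ^ 2) *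
          ∑' u : ℤ, |ρ u| ^ d := by
    intro M hdM
    have hdM1 : d ≤ M + 1 := by omega
    set CM : ℝ := ∑' q : ℕ, ((q + (M + 1)).factorial : ℝ) * |a (q + (M + 1))| * |b (q + (M + 1))|
      with hCM
    have hCMsum := hcsum (M + 1) hdM1
    have hCM0 : 0 ≤ CM := tsum_nonneg fun q => by positivity
    -- the tail
    set T : ℤ → ℝ := fun u => ∑' q : ℕ,
      ((q + (M + 1)).factorial : ℝ) * a (q + (M + 1)) * b (q + (M + 1)) * ρ u ^ (q + (M + 1))
      with hT
    have hTbound : ∀ u, |T u| ≤ CM * |ρ u| ^ d := fun u =>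
      auxBound _ _ _ hCMsum (hterm (M + 1) hdM1 u)
    -- splitting Δ
    have hsplit : ∀ u, Δ u = ΔM M u + T u := by
      intro u
      rw [hΔ u, hΔM M u]
      have hsum := hΔsummand u
      have h1 := Summable.sum_add_tsum_nat_add (f := fun q : ℕ =>
        ((q + d).factorial : ℝ) * a (q + d) * b (q + d) * ρ u ^ (q + d)) (M + 1 - d) hsum
      rw [← h1]
      congr 1
      · rw [← Finset.Ico_add_one_right_eq_Icc, Finset.sum_Ico_eq_sum_range]
        refine Finset.sum_congr (by congr 1) fun i _ => ?_
        rw [add_comm d i]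
      · refine tsum_congr fun q => ?_
        have h2 : q + (M + 1 - d) + d = q + (M + 1) := by omega
        simp only [h2]
    -- the difference of the two series
    have hΔdsum : Summable fun u : ℕ => Δ ((u : ℤ) + 1) - Δ (-((u : ℤ) + 1)) := part1.of_abs
    have hΔMdsum : Summable fun u : ℕ => ΔM M ((u : ℤ) + 1) - ΔM M (-((u : ℤ) + 1)) :=
      (part2 M).of_abs
    have key : AM M - A = (1 / 2) * ∑' u : ℕ,
        ((ΔM M ((u : ℤ) + 1) - ΔM M (-((u : ℤ) + 1))) -
          (Δ ((u : ℤ) + 1) - Δ (-((u : ℤ) + 1)))) := by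
      rw [hAM, hA, ← mul_sub, Summable.tsum_sub hΔMdsum hΔdsum]
    have hsummand : ∀ u : ℕ,
        (ΔM M ((u : ℤ) + 1) - ΔM M (-((u : ℤ) + 1))) -
          (Δ ((u : ℤ) + 1) - Δ (-((u : ℤ) + 1))) = T (-((u : ℤ) + 1)) - T ((u : ℤ) + 1) := by
      intro u
      have e1 := hsplit ((u : ℤ) + 1)
      have e2 := hsplit (-((u : ℤ) + 1))
      linarith
    -- summable bound for the tail difference
    have hbnd : ∀ u : ℕ, |T (-((u : ℤ) + 1)) - T ((u : ℤ) + 1)| ≤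
        CM * (|ρ ((u : ℤ) + 1)| ^ d + |ρ (-((u : ℤ) + 1))| ^ d) := fun u => by
      calc |T (-((u : ℤ) + 1)) - T ((u : ℤ) + 1)|
          ≤ |T (-((u : ℤ) + 1))| + |T ((u : ℤ) + 1)| := abs_sub _ _
        _ ≤ CM * |ρ (-((u : ℤ) + 1))| ^ d + CM * |ρ ((u : ℤ) + 1)| ^ d :=
          add_le_add (hTbound _) (hTbound _)
        _ = CM * (|ρ ((u : ℤ) + 1)| ^ d + |ρ (-((u : ℤ) + 1))| ^ d) := by ring
    have hbsum : Summable fun u : ℕ =>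
        CM * (|ρ ((u : ℤ) + 1)| ^ d + |ρ (-((u : ℤ) + 1))| ^ d) :=
      (hρpos.add hρneg).mul_left CM
    have habs2 : Summable fun u : ℕ => |T (-((u : ℤ) + 1)) - T ((u : ℤ) + 1)| :=
      hbsum.of_nonneg_of_le (fun u => abs_nonneg _) hbnd
    -- the tsum bound
    have h5 : |∑' u : ℕ, (T (-((u : ℤ) + 1)) - T ((u : ℤ) + 1))| ≤
        CM * ((∑' u : ℕ, |ρ ((u : ℤ) + 1)| ^ d) + ∑' u : ℕ, |ρ (-((u : ℤ) + 1))| ^ d) := by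
      calc |∑' u : ℕ, (T (-((u : ℤ) + 1)) - T ((u : ℤ) + 1))|
          = ‖∑' u : ℕ, (T (-((u : ℤ) + 1)) - T ((u : ℤ) + 1))‖ := (Real.norm_eq_abs _).symm
        _ ≤ ∑' u : ℕ, ‖T (-((u : ℤ) + 1)) - T ((u : ℤ) + 1)‖ :=
            norm_tsum_le_tsum_norm (by simpa [Real.norm_eq_abs] using habs2)
        _ = ∑' u : ℕ, |T (-((u : ℤ) + 1)) - T ((u : ℤ) + 1)| := by simp [Real.norm_eq_abs]
        _ ≤ ∑' u : ℕ, CM * (|ρ ((u : ℤ) + 1)| ^ d + |ρ (-((u : ℤ) + 1))| ^ d) :=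
            Summable.tsum_le_tsum hbnd habs2 hbsum
        _ = CM * ((∑' u : ℕ, |ρ ((u : ℤ) + 1)| ^ d) + ∑' u : ℕ, |ρ (-((u : ℤ) + 1))| ^ d) := by
            rw [tsum_mul_left, Summable.tsum_add hρpos hρneg]
    -- sums over shifted/negated indices are bounded by the full sum
    have hS0 : 0 ≤ ∑' u : ℤ, |ρ u| ^ d := tsum_nonneg fun u => by positivity
    have hSpos : (∑' u : ℕ, |ρ ((u : ℤ) + 1)| ^ d) ≤ ∑' u : ℤ, |ρ u| ^ d :=
      Summable.tsum_le_tsum_of_inj _ inj1 (fun c _ => by positivity) (fun u => le_rfl) hρpos hρd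
    have hSneg : (∑' u : ℕ, |ρ (-((u : ℤ) + 1))| ^ d) ≤ ∑' u : ℤ, |ρ u| ^ d :=
      Summable.tsum_le_tsum_of_inj _ inj2 (fun c _ => by positivity) (fun u => le_rfl) hρneg hρd
    -- Cauchy-Schwarz
    have hCS : CM ≤
        Real.sqrt (∑' q : ℕ, ((q + (M + 1)).factorial : ℝ) * a (q + (M + 1)) ^ 2) *
          Real.sqrt (∑' q : ℕ, ((q + (M + 1)).factorial : ℝ) * b (q + (M + 1)) ^ 2) := by
      have heq : ∀ q : ℕ,
          ((q + (M + 1)).factorial : ℝ) * |a (q + (M + 1))| * |b (q + (M + 1))| =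
            Real.sqrt (((q + (M + 1)).factorial : ℝ) * a (q + (M + 1)) ^ 2) *
              Real.sqrt (((q + (M + 1)).factorial : ℝ) * b (q + (M + 1)) ^ 2) := by
        intro q
        have hk : (0:ℝ) ≤ ((q + (M + 1)).factorial : ℝ) := Nat.cast_nonneg _
        rw [Real.sqrt_mul hk, Real.sqrt_mul hk, Real.sqrt_sq_eq_abs, Real.sqrt_sq_eq_abs,
          mul_mul_mul_comm, Real.mul_self_sqrt hk, mul_assoc]
      rw [hCM, tsum_congr heq]
      exact auxCS _ _ (fun q => by positivity) (fun q => by positivity)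
        (hshiftA (M + 1) hdM1) (hshiftB (M + 1) hdM1)
    -- put everything together
    have hfinal : |AM M - A| ≤ CM * ∑' u : ℤ, |ρ u| ^ d := by
      rw [key, tsum_congr hsummand, abs_mul]
      have : |(1:ℝ) / 2| = 1 / 2 := by norm_num
      rw [this]
      nlinarith [h5, hSpos, hSneg, hCM0,
        abs_nonneg (∑' u : ℕ, (T (-((u : ℤ) + 1)) - T ((u : ℤ) + 1)))]
    calc |AM M - A| ≤ CM * ∑' u : ℤ, |ρ u| ^ d := hfinal
      _ ≤ _ := by
        apply mul_le_mul_of_nonneg_right hCS hS0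
  refine ⟨part1, part2, part3, ?_⟩
  -- Part 4
  set F : ℕ → ℝ := fun q => ((q + d).factorial : ℝ) * a (q + d) ^ 2 with hF
  set G : ℕ → ℝ := fun q => ((q + d).factorial : ℝ) * b (q + d) ^ 2 with hG
  have hshift2 : Tendsto (fun M : ℕ => M + 1 - d) atTop atTop := by
    refine tendsto_atTop_atTop.mpr fun n => ⟨n + d, fun m hm => by omega⟩
  have hTAt : Tendsto (fun M : ℕ => ∑' q : ℕ, F (q + (M + 1 - d))) atTop (nhds 0) :=
    (tendsto_sum_nat_add F).comp hshift2
  have hTBt : Tendsto (fun M : ℕ => ∑' q : ℕ, G (q + (M + 1 - d))) atTop (nhds 0) :=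
    (tendsto_sum_nat_add G).comp hshift2
  have hTAeq : ∀ M : ℕ, d ≤ M →
      (∑' q : ℕ, ((q + (M + 1)).factorial : ℝ) * a (q + (M + 1)) ^ 2)
        = ∑' q : ℕ, F (q + (M + 1 - d)) := by
    intro M hM
    refine tsum_congr fun q => ?_
    simp only [hF]
    have h : q + (M + 1 - d) + d = q + (M + 1) := by omega
    rw [h]
  have hTBeq : ∀ M : ℕ, d ≤ M →
      (∑' q : ℕ, ((q + (M + 1)).factorial : ℝ) * b (q + (M + 1)) ^ 2)
        = ∑' q : ℕ, G (q + (M + 1 - d)) := by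
    intro M hM
    refine tsum_congr fun q => ?_
    simp only [hG]
    have h : q + (M + 1 - d) + d = q + (M + 1) := by omega
    rw [h]
  have hboundt : Tendsto (fun M : ℕ =>
      Real.sqrt (∑' q : ℕ, F (q + (M + 1 - d))) *
        Real.sqrt (∑' q : ℕ, G (q + (M + 1 - d))) * ∑' u : ℤ, |ρ u| ^ d)
      atTop (nhds 0) := by
    have h1 : Tendsto (fun M : ℕ => Real.sqrt (∑' q : ℕ, F (q + (M + 1 - d)))) atTop
        (nhds 0) := by
      have := (Real.continuous_sqrt.tendsto 0).comp hTAt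
      simpa [Function.comp_def] using this
    have h2 : Tendsto (fun M : ℕ => Real.sqrt (∑' q : ℕ, G (q + (M + 1 - d)))) atTop
        (nhds 0) := by
      have := (Real.continuous_sqrt.tendsto 0).comp hTBt
      simpa [Function.comp_def] using this
    have := (h1.mul h2).mul (tendsto_const_nhds (x := ∑' u : ℤ, |ρ u| ^ d))
    simpa using this
  have habst : Tendsto (fun M => |AM M - A|) atTop (nhds 0) := by
    refine squeeze_zero' (Eventually.of_forall fun M => abs_nonneg _) ?_ hboundt
    filter_upwards [eventually_ge_atTop d] with M hM
    have h := part3 M hM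
    rwa [hTAeq M hM, hTBeq M hM] at h
  have hsub : Tendsto (fun M => AM M - A) atTop (nhds 0) :=
    (tendsto_zero_iff_abs_tendsto_zero _).2 habst
  have := hsub.add_const A
  simpa using this
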